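/- Let m ≥ 2 and suppose reals t₁ᵢ, t₂ᵢ, t₃ᵢ, t₄ᵢ, t₅ᵢ (i ∈ [m], d = 1 case with scalar t₁ᵢ, t₂ᵢ) satisfy the system Σᵢ₌₁ᵐ Σ_{α∈I_{ℓ₁,ℓ₂}} t₅ᵢ² t₁ᵢ^{α₁} t₂ᵢ^{α₂} t₃ᵢ^{α₃} t₄ᵢ^{α₄}/(α₁!α₂!α₃!α₄!) = 0 for all (ℓ₁,ℓ₂) with 1 ≤ ℓ₁+ℓ₂ ≤ 4, where I_{ℓ₁,ℓ₂} = {α ∈ ℕ⁴ : α₁+α₂ = ℓ₁, α₃+2α₄ = ℓ₂−α₂}. If m = 2 and all t₅ᵢ ≠ 0, then every solution has t₄₁ = t₄₂ = 0 (i.e., there is no non-trivial solution, so r₂(2) ≤ 4). -/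
import Mathlib


/-- The index set `I_{ℓ₁,ℓ₂} = {α ∈ ℕ⁴ : α₁+α₂ = ℓ₁, α₃+2α₄ = ℓ₂−α₂}` (for `d = 1`). -/
def Iset (ℓ₁ ℓ₂ : ℕ) : Finset (ℕ × ℕ × ℕ × ℕ) :=
  ((Finset.range (ℓ₁ + 1)) ×ˢ (Finset.range (ℓ₁ + 1)) ×ˢ (Finset.range (ℓ₂ + 1)) ×ˢ
      (Finset.range (ℓ₂ + 1))).filter
    (fun α => α.1 + α.2.1 = ℓ₁ ∧ α.2.1 + α.2.2.1 + 2 * α.2.2.2 = ℓ₂)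

/-- For `m = 2` (and `d = 1`), the polynomial system
`Σᵢ Σ_{α ∈ I_{ℓ₁,ℓ₂}} t₅ᵢ² t₁ᵢ^{α₁} t₂ᵢ^{α₂} t₃ᵢ^{α₃} t₄ᵢ^{α₄}/(α₁!α₂!α₃!α₄!) = 0`
for all `1 ≤ ℓ₁+ℓ₂ ≤ 4` forces `t₄₁ = t₄₂ = 0` whenever both `t₅ᵢ` are nonzero,
i.e. the system has no non-trivial solution (so `r₂(2) ≤ 4`). -/
theorem stmt_19 (t₁ t₂ t₃ t₄ t₅ : Fin 2 → ℝ) (h₅ : ∀ i, t₅ i ≠ 0)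
    (hsys : ∀ ℓ₁ ℓ₂ : ℕ, 1 ≤ ℓ₁ + ℓ₂ → ℓ₁ + ℓ₂ ≤ 4 →
      ∑ i : Fin 2, ∑ α ∈ Iset ℓ₁ ℓ₂,
        t₅ i ^ 2 * t₁ i ^ α.1 * t₂ i ^ α.2.1 * t₃ i ^ α.2.2.1 * t₄ i ^ α.2.2.2 /
          ((Nat.factorial α.1 : ℝ) * (Nat.factorial α.2.1) * (Nat.factorial α.2.2.1) *
            (Nat.factorial α.2.2.2)) = 0) :
    t₄ 0 = 0 ∧ t₄ 1 = 0 := by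
  have E1 := hsys 0 1 (by norm_num) (by norm_num)
  have E2 := hsys 0 2 (by norm_num) (by norm_num)
  have E3 := hsys 0 3 (by norm_num) (by norm_num)
  have E4 := hsys 0 4 (by norm_num) (by norm_num)
  rw [show Iset 0 1 = {(0,0,1,0)} by decide] at E1
  rw [show Iset 0 2 = {(0,0,2,0),(0,0,0,1)} by decide] at E2
  rw [show Iset 0 3 = {(0,0,3,0),(0,0,1,1)} by decide] at E3
  rw [show Iset 0 4 = {(0,0,4,0),(0,0,2,1),(0,0,0,2)} by decide] at E4
  norm_num [Fin.sum_univ_two, Finset.sum_insert, Finset.mem_insert, Nat.factorial] at E1 E2 E3 E4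
  have ha : (0:ℝ) < t₅ 0 ^ 2 := by have := h₅ 0; positivity
  have hb : (0:ℝ) < t₅ 1 ^ 2 := by have := h₅ 1; positivity
  set a := t₅ 0 ^ 2 with hadef
  set b := t₅ 1 ^ 2 with hbdef
  set p := t₃ 0 with hpdef
  set q := t₃ 1 with hqdef
  set s := t₄ 0 with hsdef
  set t := t₄ 1 with htdef
  clear_value a b p q s t
  clear hsys hadef hbdef hpdef hqdef hsdef htdef
  -- E1 : a*p + b*q = 0
  -- E2 : a*p^2/2 + a*s + (b*q^2/2 + b*t) = 0
  -- E3 : a*p^3/6 + a*p*s + (b*q^3/6 + b*q*t) = 0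
  -- E4 : a*p^4/24 + (a*p^2*s/2 + a*s^2/2) + (b*q^4/24 + (b*q^2*t/2 + b*t^2/2)) = 0
  rcases eq_or_ne p 0 with hp | hp
  · -- then q = 0, and sum-of-squares forces s = t = 0
    have hq : q = 0 := by
      have h : b * q = 0 := by rw [hp] at E1; linarith
      exact (mul_eq_zero.mp h).resolve_left hb.ne'
    rw [hp, hq] at E2 E4
    have hst : a * s + b * t = 0 := by linarith [E2]
    have hsq : a * s ^ 2 + b * t ^ 2 = 0 := by nlinarith [E4]
    have hs2 : a * s ^ 2 = 0 := by nlinarith [mul_nonneg ha.le (sq_nonneg s), mul_nonneg hb.le (sq_nonneg t)]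
    have ht2 : b * t ^ 2 = 0 := by nlinarith [mul_nonneg ha.le (sq_nonneg s), mul_nonneg hb.le (sq_nonneg t)]
    have hs : s = 0 := pow_eq_zero_iff two_ne_zero |>.mp ((mul_eq_zero.mp hs2).resolve_left ha.ne')
    have ht : t = 0 := pow_eq_zero_iff two_ne_zero |>.mp ((mul_eq_zero.mp ht2).resolve_left hb.ne')
    exact ⟨hs, ht⟩
  · exfalso
    have hp2 : 0 < p ^ 2 := lt_of_le_of_ne (sq_nonneg p) (Ne.symm (pow_ne_zero 2 hp))
    have hbq : b * q = -(a * p) := by linarith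
    have hpq : b * (p * q) = -(a * p ^ 2) := by linear_combination p * hbq
    have hpqneg : p * q < 0 := by nlinarith [mul_pos ha hp2]
    have hpqne : p - q ≠ 0 := by intro h; nlinarith
    have key_s : a * (p - q) * (6 * s + p ^ 2 - 2 * p * q) = 0 := by
      linear_combination 6 * E3 - 6 * q * E2 + 2 * q ^ 2 * E1
    have key_t : b * (q - p) * (6 * t + q ^ 2 - 2 * p * q) = 0 := by
      linear_combination 6 * E3 - 6 * p * E2 + 2 * p ^ 2 * E1
    have hs6 : 6 * s = 2 * p * q - p ^ 2 := by
      have h := (mul_eq_zero.mp key_s).resolve_left (mul_ne_zero ha.ne' hpqne)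
      linarith
    have ht6 : 6 * t = 2 * p * q - q ^ 2 := by
      have h := (mul_eq_zero.mp key_t).resolve_left
        (mul_ne_zero hb.ne' (fun hc => hpqne (by linarith [sub_eq_zero.mp hc])))
      linarith
    have hfin : a * p * ((p - q) * (p ^ 2 - p * q + q ^ 2)) = 0 := by
      linear_combination (-36 : ℝ) * E4 + (a * (6 * s + 2 * p * q - p ^ 2) / 2 + 3 * a * p ^ 2) * hs6
        + (b * (6 * t + 2 * p * q - q ^ 2) / 2 + 3 * b * q ^ 2) * ht6
        + q * (-q ^ 2 + 4 * p * q + 2 * p ^ 2) * hbq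
    have h1 : a * p ≠ 0 := mul_ne_zero ha.ne' hp
    have h2 : (p - q) * (p ^ 2 - p * q + q ^ 2) ≠ 0 := by
      apply mul_ne_zero hpqne
      nlinarith
    exact (mul_ne_zero h1 h2) hfin
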